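/- Theorem 1 for n = 4 (local form): if α₁,…,α₄ ∈ ℂ with α₁α₂α₃α₄ = 1, then as formal power series in Y, (1 - Y²)⁻¹ · Σ_{k ≥ 0} s_{(k,k,0,0)}(α₁,…,α₄) Y^{k} = ∏_{1≤i<j≤4}(1 - αᵢαⱼ Y)⁻¹, i.e. the local exterior square factor equals (1-Y²)⁻¹ times the generating function of the 'middle' Schur values s_{(k,k,0,0)}. -/

import Mathlib

/-- The complete homogeneous symmetric function `h_m` evaluated at `α 0, …, α (n-1)`. -/
noncomputable def hVal {R : Type*} [CommRing R] (n : ℕ) (α : Fin n → R) (m : ℕ) : R :=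
  ∑ d ∈ Finset.Nat.antidiagonalTuple n m, ∏ i, α i ^ d i

/-- `h_m` extended by zero to negative integer indices. -/
noncomputable def hValZ {R : Type*} [CommRing R] (n : ℕ) (α : Fin n → R) (m : ℤ) : R :=
  if 0 ≤ m then hVal n α m.toNat else 0

/-- The Schur polynomial `s_λ` evaluated at `α`, defined by the Jacobi–Trudi
determinant `det (h_{λ_i - i + j})`. -/
noncomputable def schurVal {R : Type*} [CommRing R] (n : ℕ) (α : Fin n → R)
    (lam : Fin n → ℕ) : R :=
  (Matrix.of fun i j : Fin n => hValZ n α ((lam i : ℤ) - (i : ℤ) + (j : ℤ))).det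

/-- Zero-padded extension of a sequence to integer indices. -/
noncomputable def Fz (f : ℕ → ℂ) (j : ℤ) : ℂ := if 0 ≤ j then f j.toNat else 0

lemma hValZ_eq_Fz (n : ℕ) (α : Fin n → ℂ) : hValZ n α = Fz (hVal n α) := rfl

lemma Fz_natCast (f : ℕ → ℂ) (k : ℕ) : Fz f (k : ℤ) = f k := by simp [Fz]

lemma Fz_neg (f : ℕ → ℂ) (j : ℤ) (hj : j < 0) : Fz f j = 0 := by
  rw [Fz, if_neg (by omega)]

lemma Fz_hVal_zero (n : ℕ) (α : Fin n → ℂ) : Fz (hVal n α) 0 = 1 := by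
  rw [Fz, if_pos le_rfl, Int.toNat_zero, hVal, Finset.Nat.antidiagonalTuple_zero_right,
    Finset.sum_singleton]
  simp

lemma geom_mul (a : ℂ) :
    (PowerSeries.mk fun m => a ^ m) * (1 - PowerSeries.C a * PowerSeries.X) = 1 := by
  ext n
  cases n with
  | zero => simp
  | succ n =>
    have h1 : (PowerSeries.mk fun m => a ^ m) * (PowerSeries.C a * PowerSeries.X)
        = (PowerSeries.C a * PowerSeries.mk fun m => a ^ m) * PowerSeries.X := by ring
    rw [mul_sub, mul_one, map_sub, h1, PowerSeries.coeff_succ_mul_X, PowerSeries.coeff_C_mul,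
      PowerSeries.coeff_mk, PowerSeries.coeff_mk, PowerSeries.coeff_one]
    simp [pow_succ, mul_comm]

lemma mk_hVal (n : ℕ) (α : Fin n → ℂ) :
    PowerSeries.mk (hVal n α) = ∏ i, PowerSeries.mk fun m => α i ^ m := by
  ext m
  rw [PowerSeries.coeff_mk, PowerSeries.coeff_prod]
  unfold hVal
  refine Finset.sum_nbij' (fun d => Finsupp.equivFunOnFinite.symm d) (fun l => ⇑l) ?_ ?_ ?_ ?_ ?_
  · intro d hd
    rw [Finset.Nat.mem_antidiagonalTuple] at hd
    simp only [Finset.mem_finsuppAntidiag]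
    refine ⟨by simpa using hd, Finset.subset_univ _⟩
  · intro l hl
    rw [Finset.Nat.mem_antidiagonalTuple]
    rw [Finset.mem_finsuppAntidiag] at hl
    simpa using hl.1
  · intro d _; simp [Finsupp.equivFunOnFinite]; rfl
  · intro l _; simp
  · intro d _; simp [PowerSeries.coeff_mk]

lemma hVal_mul_four (α : Fin 4 → ℂ) :
    PowerSeries.mk (hVal 4 α) *
      ((1 - PowerSeries.C (α 0) * PowerSeries.X) * (1 - PowerSeries.C (α 1) * PowerSeries.X) *
       (1 - PowerSeries.C (α 2) * PowerSeries.X) * (1 - PowerSeries.C (α 3) * PowerSeries.X))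
      = 1 := by
  rw [mk_hVal, Fin.prod_univ_four]
  rw [show ((PowerSeries.mk fun m => α 0 ^ m) * (PowerSeries.mk fun m => α 1 ^ m) *
      (PowerSeries.mk fun m => α 2 ^ m) * (PowerSeries.mk fun m => α 3 ^ m)) *
      ((1 - PowerSeries.C (α 0) * PowerSeries.X) * (1 - PowerSeries.C (α 1) * PowerSeries.X) *
       (1 - PowerSeries.C (α 2) * PowerSeries.X) * (1 - PowerSeries.C (α 3) * PowerSeries.X))
    = ((PowerSeries.mk fun m => α 0 ^ m) * (1 - PowerSeries.C (α 0) * PowerSeries.X)) *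
      ((PowerSeries.mk fun m => α 1 ^ m) * (1 - PowerSeries.C (α 1) * PowerSeries.X)) *
      ((PowerSeries.mk fun m => α 2 ^ m) * (1 - PowerSeries.C (α 2) * PowerSeries.X)) *
      ((PowerSeries.mk fun m => α 3 ^ m) * (1 - PowerSeries.C (α 3) * PowerSeries.X)) from by
        ring,
    geom_mul, geom_mul, geom_mul, geom_mul]
  ring

lemma coeff_mul_CXp (f : ℕ → ℂ) (c : ℂ) (d n : ℕ) :
    PowerSeries.coeff n (PowerSeries.mk f * (PowerSeries.C c * PowerSeries.X ^ d)) =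
      c * Fz f ((n : ℤ) - d) := by
  rw [show PowerSeries.mk f * (PowerSeries.C c * PowerSeries.X ^ d)
      = PowerSeries.C c * (PowerSeries.mk f * PowerSeries.X ^ d) from by ring,
    PowerSeries.coeff_C_mul, PowerSeries.coeff_mul_X_pow']
  congr 1
  rw [Fz]
  split_ifs with h1 h2 h2
  · rw [PowerSeries.coeff_mk]; congr 1; omega
  · omega
  · omega
  · rfl

lemma coeff_mul_poly6 (f : ℕ → ℂ) (c1 c2 c3 c4 c5 c6 : ℂ) (n : ℕ) :
    PowerSeries.coeff n (PowerSeries.mk f *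
      (1 - PowerSeries.C c1 * PowerSeries.X + PowerSeries.C c2 * PowerSeries.X ^ 2
        - PowerSeries.C c3 * PowerSeries.X ^ 3 + PowerSeries.C c4 * PowerSeries.X ^ 4
        - PowerSeries.C c5 * PowerSeries.X ^ 5 + PowerSeries.C c6 * PowerSeries.X ^ 6)) =
      f n - c1 * Fz f ((n : ℤ) - 1) + c2 * Fz f ((n : ℤ) - 2) - c3 * Fz f ((n : ℤ) - 3)
        + c4 * Fz f ((n : ℤ) - 4) - c5 * Fz f ((n : ℤ) - 5) + c6 * Fz f ((n : ℤ) - 6) := by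
  rw [show PowerSeries.mk f *
      (1 - PowerSeries.C c1 * PowerSeries.X + PowerSeries.C c2 * PowerSeries.X ^ 2
        - PowerSeries.C c3 * PowerSeries.X ^ 3 + PowerSeries.C c4 * PowerSeries.X ^ 4
        - PowerSeries.C c5 * PowerSeries.X ^ 5 + PowerSeries.C c6 * PowerSeries.X ^ 6)
      = PowerSeries.mk f - PowerSeries.mk f * (PowerSeries.C c1 * PowerSeries.X ^ 1)
        + PowerSeries.mk f * (PowerSeries.C c2 * PowerSeries.X ^ 2)
        - PowerSeries.mk f * (PowerSeries.C c3 * PowerSeries.X ^ 3)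
        + PowerSeries.mk f * (PowerSeries.C c4 * PowerSeries.X ^ 4)
        - PowerSeries.mk f * (PowerSeries.C c5 * PowerSeries.X ^ 5)
        + PowerSeries.mk f * (PowerSeries.C c6 * PowerSeries.X ^ 6) from by ring]
  simp only [map_sub, map_add, coeff_mul_CXp, PowerSeries.coeff_mk]
  push_cast
  ring

lemma coeff_mul_poly4 (f : ℕ → ℂ) (c1 c2 c3 c4 : ℂ) (n : ℕ) :
    PowerSeries.coeff n (PowerSeries.mk f *
      (1 - PowerSeries.C c1 * PowerSeries.X + PowerSeries.C c2 * PowerSeries.X ^ 2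
        - PowerSeries.C c3 * PowerSeries.X ^ 3 + PowerSeries.C c4 * PowerSeries.X ^ 4)) =
      f n - c1 * Fz f ((n : ℤ) - 1) + c2 * Fz f ((n : ℤ) - 2) - c3 * Fz f ((n : ℤ) - 3)
        + c4 * Fz f ((n : ℤ) - 4) := by
  rw [show PowerSeries.mk f *
      (1 - PowerSeries.C c1 * PowerSeries.X + PowerSeries.C c2 * PowerSeries.X ^ 2
        - PowerSeries.C c3 * PowerSeries.X ^ 3 + PowerSeries.C c4 * PowerSeries.X ^ 4)
      = PowerSeries.mk f - PowerSeries.mk f * (PowerSeries.C c1 * PowerSeries.X ^ 1)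
        + PowerSeries.mk f * (PowerSeries.C c2 * PowerSeries.X ^ 2)
        - PowerSeries.mk f * (PowerSeries.C c3 * PowerSeries.X ^ 3)
        + PowerSeries.mk f * (PowerSeries.C c4 * PowerSeries.X ^ 4) from by ring]
  simp only [map_sub, map_add, coeff_mul_CXp, PowerSeries.coeff_mk]
  push_cast
  ring

theorem det_fin_four' {R : Type*} [CommRing R] (M : Matrix (Fin 4) (Fin 4) R) :
    M.det =
      M 0 0 * M 1 1 * M 2 2 * M 3 3 - M 0 0 * M 1 1 * M 2 3 * M 3 2 -
      M 0 0 * M 1 2 * M 2 1 * M 3 3 + M 0 0 * M 1 2 * M 2 3 * M 3 1 +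
      M 0 0 * M 1 3 * M 2 1 * M 3 2 - M 0 0 * M 1 3 * M 2 2 * M 3 1 -
      M 0 1 * M 1 0 * M 2 2 * M 3 3 + M 0 1 * M 1 0 * M 2 3 * M 3 2 +
      M 0 1 * M 1 2 * M 2 0 * M 3 3 - M 0 1 * M 1 2 * M 2 3 * M 3 0 -
      M 0 1 * M 1 3 * M 2 0 * M 3 2 + M 0 1 * M 1 3 * M 2 2 * M 3 0 +
      M 0 2 * M 1 0 * M 2 1 * M 3 3 - M 0 2 * M 1 0 * M 2 3 * M 3 1 -
      M 0 2 * M 1 1 * M 2 0 * M 3 3 + M 0 2 * M 1 1 * M 2 3 * M 3 0 +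
      M 0 2 * M 1 3 * M 2 0 * M 3 1 - M 0 2 * M 1 3 * M 2 1 * M 3 0 -
      M 0 3 * M 1 0 * M 2 1 * M 3 2 + M 0 3 * M 1 0 * M 2 2 * M 3 1 +
      M 0 3 * M 1 1 * M 2 0 * M 3 2 - M 0 3 * M 1 1 * M 2 2 * M 3 0 -
      M 0 3 * M 1 2 * M 2 0 * M 3 1 + M 0 3 * M 1 2 * M 2 1 * M 3 0 := by
  rw [Matrix.det_succ_row_zero]
  simp only [Fin.sum_univ_four, Matrix.det_fin_three, Matrix.submatrix_apply]
  norm_num [Fin.succAbove, Fin.lt_def, show (Fin.succ 2 : Fin 4) = 3 from rfl,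
    show ((3 : Fin 4) : ℕ) = 3 from rfl, show (Fin.castSucc 2 : Fin 4) = 2 from rfl,
    show (Fin.castSucc 1 : Fin 4) = 1 from rfl, show (Fin.castSucc 0 : Fin 4) = 0 from rfl]
  ring

lemma sch4 (α : Fin 4 → ℂ) (k : ℕ) :
    schurVal 4 α ![k, k, 0, 0] =
      Fz (hVal 4 α) (k : ℤ) * Fz (hVal 4 α) (k : ℤ)
        - Fz (hVal 4 α) ((k : ℤ) + 1) * Fz (hVal 4 α) ((k : ℤ) - 1) := by
  rw [schurVal, det_fin_four']
  simp only [Matrix.of_apply, Matrix.cons_val_zero, Matrix.cons_val_one, Matrix.head_cons,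
    Matrix.cons_val_two, Matrix.cons_val_three, Matrix.tail_cons, Matrix.head_fin_const]
  norm_num [show ((0 : Fin 4) : ℕ) = 0 from rfl, show ((1 : Fin 4) : ℕ) = 1 from rfl,
    show ((2 : Fin 4) : ℕ) = 2 from rfl, show ((3 : Fin 4) : ℕ) = 3 from rfl]
  rw [show ((k : ℤ) - 1 + 2 : ℤ) = (k : ℤ) + 1 by ring,
    show ((k : ℤ) - 1 + 3 : ℤ) = (k : ℤ) + 2 by ring]
  rw [hValZ_eq_Fz]
  rw [Fz_neg _ (-1) (by norm_num), Fz_neg _ (-2) (by norm_num), Fz_neg _ (-3) (by norm_num),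
    Fz_hVal_zero]
  ring

lemma key (e1 e2 e3 e4 g0 g1 g2 g3 g4 g5 g6 g7 g8 : ℂ)
    (h4 : g4 = e1*g3 - e2*g2 + e3*g1 - e4*g0)
    (h5 : g5 = e1*g4 - e2*g3 + e3*g2 - e4*g1)
    (h6 : g6 = e1*g5 - e2*g4 + e3*g3 - e4*g2)
    (h7 : g7 = e1*g6 - e2*g5 + e3*g4 - e4*g3)
    (h8 : g8 = e1*g7 - e2*g6 + e3*g5 - e4*g4) :
    (g7*g7 - g8*g6)
      - e2 * (g6*g6 - g7*g5)
      + (e1*e3 - e4) * (g5*g5 - g6*g4)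
      - (e3*e3 - 2*(e2*e4) + e1*e1*e4) * (g4*g4 - g5*g3)
      + (e1*e3*e4 - e4*e4) * (g3*g3 - g4*g2)
      - (e2*(e4*e4)) * (g2*g2 - g3*g1)
      + (e4*e4*e4) * (g1*g1 - g2*g0) = 0 := by
  subst h8; subst h7; subst h6; subst h5; subst h4; ring

/-- Theorem 1 for `n = 4` at a single prime: if `α₁α₂α₃α₄ = 1` then
`(1 - Y²)⁻¹ Σ_{k≥0} s_{(k,k,0,0)}(α) Y^k = ∏_{1≤i<j≤4} (1 - αᵢαⱼ Y)⁻¹`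
in `ℂ[[Y]]`, stated with denominators cleared. -/
theorem local_theorem_one_gl4 (α : Fin 4 → ℂ) (h : ∏ i, α i = 1) :
    (PowerSeries.mk fun k => schurVal 4 α ![k, k, 0, 0]) *
        ∏ p ∈ Finset.univ.filter (fun p : Fin 4 × Fin 4 => p.1 < p.2),
          (1 - PowerSeries.C (α p.1 * α p.2) * PowerSeries.X) =
      1 - (PowerSeries.X : PowerSeries ℂ) ^ 2 := by
  obtain ⟨e1, he1⟩ : ∃ x : ℂ, x = α 0 + α 1 + α 2 + α 3 := ⟨_, rfl⟩
  obtain ⟨e2, he2⟩ : ∃ x : ℂ, x = α 0*α 1 + α 0*α 2 + α 0*α 3 + α 1*α 2 + α 1*α 3 + α 2*α 3 :=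
    ⟨_, rfl⟩
  obtain ⟨e3, he3⟩ : ∃ x : ℂ, x = α 0*α 1*α 2 + α 0*α 1*α 3 + α 0*α 2*α 3 + α 1*α 2*α 3 :=
    ⟨_, rfl⟩
  obtain ⟨e4, he4⟩ : ∃ x : ℂ, x = α 0*α 1*α 2*α 3 := ⟨_, rfl⟩
  have hprod : e4 = 1 := by rw [he4, ← h, Fin.prod_univ_four]
  -- the h-recurrence
  have hQ4 : PowerSeries.mk (hVal 4 α) *
      (1 - PowerSeries.C e1 * PowerSeries.X + PowerSeries.C e2 * PowerSeries.X ^ 2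
        - PowerSeries.C e3 * PowerSeries.X ^ 3 + PowerSeries.C e4 * PowerSeries.X ^ 4) = 1 := by
    rw [he1, he2, he3, he4]
    rw [show (1 - PowerSeries.C (α 0 + α 1 + α 2 + α 3) * PowerSeries.X
        + PowerSeries.C (α 0*α 1 + α 0*α 2 + α 0*α 3 + α 1*α 2 + α 1*α 3 + α 2*α 3)
            * PowerSeries.X ^ 2
        - PowerSeries.C (α 0*α 1*α 2 + α 0*α 1*α 3 + α 0*α 2*α 3 + α 1*α 2*α 3)
            * PowerSeries.X ^ 3
        + PowerSeries.C (α 0*α 1*α 2*α 3) * PowerSeries.X ^ 4)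
      = (1 - PowerSeries.C (α 0) * PowerSeries.X) * (1 - PowerSeries.C (α 1) * PowerSeries.X)
        * (1 - PowerSeries.C (α 2) * PowerSeries.X)
        * (1 - PowerSeries.C (α 3) * PowerSeries.X) from by
          simp only [map_add, map_mul]; ring]
    exact hVal_mul_four α
  have hrec : ∀ n : ℕ, hVal 4 α n - e1 * Fz (hVal 4 α) ((n : ℤ) - 1)
      + e2 * Fz (hVal 4 α) ((n : ℤ) - 2) - e3 * Fz (hVal 4 α) ((n : ℤ) - 3)
      + e4 * Fz (hVal 4 α) ((n : ℤ) - 4) = if n = 0 then 1 else 0 := by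
    intro n
    rw [← coeff_mul_poly4 (hVal 4 α) e1 e2 e3 e4 n, hQ4, PowerSeries.coeff_one]
  have REC : ∀ m : ℤ, 1 ≤ m → Fz (hVal 4 α) m
      = e1 * Fz (hVal 4 α) (m - 1) - e2 * Fz (hVal 4 α) (m - 2)
        + e3 * Fz (hVal 4 α) (m - 3) - e4 * Fz (hVal 4 α) (m - 4) := by
    intro m hm
    obtain ⟨n, rfl⟩ : ∃ n : ℕ, m = (n : ℤ) := ⟨m.toNat, by omega⟩
    have t := hrec n
    rw [if_neg (by omega)] at t
    rw [Fz_natCast]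
    linear_combination t
  -- small values
  have q1 : Fz (hVal 4 α) 1 = e1 := by
    have t := REC 1 (by norm_num)
    rw [show (1:ℤ) - 1 = 0 by norm_num, show (1:ℤ) - 2 = -1 by norm_num,
      show (1:ℤ) - 3 = -2 by norm_num, show (1:ℤ) - 4 = -3 by norm_num, Fz_hVal_zero,
      Fz_neg _ (-1) (by norm_num), Fz_neg _ (-2) (by norm_num), Fz_neg _ (-3) (by norm_num)] at t
    rw [t]; ring
  have q2 : Fz (hVal 4 α) 2 = e1*e1 - e2 := by
    have t := REC 2 (by norm_num)
    rw [show (2:ℤ) - 1 = 1 by norm_num, show (2:ℤ) - 2 = 0 by norm_num,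
      show (2:ℤ) - 3 = -1 by norm_num, show (2:ℤ) - 4 = -2 by norm_num, Fz_hVal_zero,
      Fz_neg _ (-1) (by norm_num), Fz_neg _ (-2) (by norm_num), q1] at t
    rw [t]; ring
  have q3 : Fz (hVal 4 α) 3 = e1*e1*e1 - 2*(e1*e2) + e3 := by
    have t := REC 3 (by norm_num)
    rw [show (3:ℤ) - 1 = 2 by norm_num, show (3:ℤ) - 2 = 1 by norm_num,
      show (3:ℤ) - 3 = 0 by norm_num, show (3:ℤ) - 4 = -1 by norm_num, Fz_hVal_zero,
      Fz_neg _ (-1) (by norm_num), q1, q2] at t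
    rw [t]; ring
  have q4 : Fz (hVal 4 α) 4
      = e1*e1*e1*e1 - 3*(e1*e1*e2) + e2*e2 + 2*(e1*e3) - e4 := by
    have t := REC 4 (by norm_num)
    rw [show (4:ℤ) - 1 = 3 by norm_num, show (4:ℤ) - 2 = 2 by norm_num,
      show (4:ℤ) - 3 = 1 by norm_num, show (4:ℤ) - 4 = 0 by norm_num, Fz_hVal_zero,
      q1, q2, q3] at t
    rw [t]; ring
  -- Schur values in terms of h values, with zero padding
  have SZ : ∀ j : ℤ, Fz (fun k => schurVal 4 α ![k, k, 0, 0]) j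
      = Fz (hVal 4 α) j * Fz (hVal 4 α) j
        - Fz (hVal 4 α) (j + 1) * Fz (hVal 4 α) (j - 1) := by
    intro j
    rcases le_or_gt 0 j with hj | hj
    · obtain ⟨k, rfl⟩ : ∃ k : ℕ, j = (k : ℤ) := ⟨j.toNat, by omega⟩
      rw [Fz_natCast]
      exact sch4 α k
    · rw [Fz_neg _ j hj, Fz_neg (hVal 4 α) j hj, Fz_neg (hVal 4 α) (j - 1) (by omega)]
      ring
  -- expansion of the product over pairs
  have hP : (∏ p ∈ Finset.univ.filter (fun p : Fin 4 × Fin 4 => p.1 < p.2),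
        (1 - PowerSeries.C (α p.1 * α p.2) * PowerSeries.X)) =
      1 - PowerSeries.C e2 * PowerSeries.X
        + PowerSeries.C (e1*e3 - e4) * PowerSeries.X ^ 2
        - PowerSeries.C (e3*e3 - 2*(e2*e4) + e1*e1*e4) * PowerSeries.X ^ 3
        + PowerSeries.C (e1*e3*e4 - e4*e4) * PowerSeries.X ^ 4
        - PowerSeries.C (e2*(e4*e4)) * PowerSeries.X ^ 5
        + PowerSeries.C (e4*e4*e4) * PowerSeries.X ^ 6 := by
    rw [he1, he2, he3, he4]
    rw [show (Finset.univ.filter (fun p : Fin 4 × Fin 4 => p.1 < p.2)) =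
        ({((0:Fin 4),(1:Fin 4)), (0,2), (0,3), (1,2), (1,3), (2,3)} : Finset (Fin 4 × Fin 4))
      by decide]
    rw [Finset.prod_insert (by decide), Finset.prod_insert (by decide),
      Finset.prod_insert (by decide), Finset.prod_insert (by decide),
      Finset.prod_insert (by decide), Finset.prod_singleton]
    simp only [map_add, map_sub, map_mul, map_one, map_ofNat]
    ring
  ext n
  rw [hP, coeff_mul_poly6, map_sub, PowerSeries.coeff_one, PowerSeries.coeff_X_pow]
  simp only [SZ]
  rw [sch4 α n]
  rw [show ((n:ℤ) - 1 + 1 : ℤ) = (n:ℤ) by ring, show ((n:ℤ) - 1 - 1 : ℤ) = (n:ℤ) - 2 by ring,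
    show ((n:ℤ) - 2 + 1 : ℤ) = (n:ℤ) - 1 by ring, show ((n:ℤ) - 2 - 1 : ℤ) = (n:ℤ) - 3 by ring,
    show ((n:ℤ) - 3 + 1 : ℤ) = (n:ℤ) - 2 by ring, show ((n:ℤ) - 3 - 1 : ℤ) = (n:ℤ) - 4 by ring,
    show ((n:ℤ) - 4 + 1 : ℤ) = (n:ℤ) - 3 by ring, show ((n:ℤ) - 4 - 1 : ℤ) = (n:ℤ) - 5 by ring,
    show ((n:ℤ) - 5 + 1 : ℤ) = (n:ℤ) - 4 by ring, show ((n:ℤ) - 5 - 1 : ℤ) = (n:ℤ) - 6 by ring,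
    show ((n:ℤ) - 6 + 1 : ℤ) = (n:ℤ) - 5 by ring, show ((n:ℤ) - 6 - 1 : ℤ) = (n:ℤ) - 7 by ring]
  by_cases hn : 4 ≤ n
  · rw [if_neg (by omega), if_neg (by omega)]
    have r1 := REC ((n:ℤ) - 3) (by omega)
    rw [show ((n:ℤ) - 3 - 1 : ℤ) = (n:ℤ) - 4 by ring, show ((n:ℤ) - 3 - 2 : ℤ) = (n:ℤ) - 5 by ring,
      show ((n:ℤ) - 3 - 3 : ℤ) = (n:ℤ) - 6 by ring,
      show ((n:ℤ) - 3 - 4 : ℤ) = (n:ℤ) - 7 by ring] at r1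
    have r2 := REC ((n:ℤ) - 2) (by omega)
    rw [show ((n:ℤ) - 2 - 1 : ℤ) = (n:ℤ) - 3 by ring, show ((n:ℤ) - 2 - 2 : ℤ) = (n:ℤ) - 4 by ring,
      show ((n:ℤ) - 2 - 3 : ℤ) = (n:ℤ) - 5 by ring,
      show ((n:ℤ) - 2 - 4 : ℤ) = (n:ℤ) - 6 by ring] at r2
    have r3 := REC ((n:ℤ) - 1) (by omega)
    rw [show ((n:ℤ) - 1 - 1 : ℤ) = (n:ℤ) - 2 by ring, show ((n:ℤ) - 1 - 2 : ℤ) = (n:ℤ) - 3 by ring,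
      show ((n:ℤ) - 1 - 3 : ℤ) = (n:ℤ) - 4 by ring,
      show ((n:ℤ) - 1 - 4 : ℤ) = (n:ℤ) - 5 by ring] at r3
    have r4 := REC (n:ℤ) (by omega)
    have r5 := REC ((n:ℤ) + 1) (by omega)
    rw [show ((n:ℤ) + 1 - 1 : ℤ) = (n:ℤ) by ring, show ((n:ℤ) + 1 - 2 : ℤ) = (n:ℤ) - 1 by ring,
      show ((n:ℤ) + 1 - 3 : ℤ) = (n:ℤ) - 2 by ring,
      show ((n:ℤ) + 1 - 4 : ℤ) = (n:ℤ) - 3 by ring] at r5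
    linear_combination key e1 e2 e3 e4 (Fz (hVal 4 α) ((n:ℤ) - 7)) (Fz (hVal 4 α) ((n:ℤ) - 6))
      (Fz (hVal 4 α) ((n:ℤ) - 5)) (Fz (hVal 4 α) ((n:ℤ) - 4)) (Fz (hVal 4 α) ((n:ℤ) - 3))
      (Fz (hVal 4 α) ((n:ℤ) - 2)) (Fz (hVal 4 α) ((n:ℤ) - 1)) (Fz (hVal 4 α) (n:ℤ))
      (Fz (hVal 4 α) ((n:ℤ) + 1)) r1 r2 r3 r4 r5
  · push_neg at hn
    interval_cases n
    · norm_num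
      rw [Fz_hVal_zero, q1, Fz_neg _ (-1) (by norm_num), Fz_neg _ (-2) (by norm_num),
        Fz_neg _ (-3) (by norm_num), Fz_neg _ (-4) (by norm_num), Fz_neg _ (-5) (by norm_num),
        Fz_neg _ (-6) (by norm_num), Fz_neg _ (-7) (by norm_num)]
      ring
    · norm_num
      rw [Fz_hVal_zero, q1, q2, Fz_neg _ (-1) (by norm_num), Fz_neg _ (-2) (by norm_num),
        Fz_neg _ (-3) (by norm_num), Fz_neg _ (-4) (by norm_num), Fz_neg _ (-5) (by norm_num),
        Fz_neg _ (-6) (by norm_num)]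
      ring
    · norm_num
      rw [Fz_hVal_zero, q1, q2, q3, Fz_neg _ (-1) (by norm_num), Fz_neg _ (-2) (by norm_num),
        Fz_neg _ (-3) (by norm_num), Fz_neg _ (-4) (by norm_num), Fz_neg _ (-5) (by norm_num)]
      linear_combination (-1 : ℂ) * hprod
    · norm_num
      rw [Fz_hVal_zero, q1, q2, q3, q4, Fz_neg _ (-1) (by norm_num),
        Fz_neg _ (-2) (by norm_num), Fz_neg _ (-3) (by norm_num), Fz_neg _ (-4) (by norm_num)]
      ring
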